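/- The Gaussian radial basis function is strictly positive definite on ℝ²: for every shape parameter α > 0, every n ≥ 1, every tuple of pairwise distinct points x₁,…,xₙ ∈ ℝ², and every nonzero vector c ∈ ℝⁿ, one has ∑_{i=1}^{n} ∑_{j=1}^{n} c_i c_j exp(−α² ‖x_i − x_j‖₂²) > 0. Equivalently, the n×n matrix with entries exp(−α² ‖x_i − x_j‖₂²) is positive definite whenever the nodes x₁,…,xₙ are pairwise distinct. -/

import Mathlib

open Real MeasureTheory
open scoped RealInnerProductSpace

noncomputable section

namespace GaussAux

abbrev V := EuclideanSpace ℝ (Fin 2)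

lemma exp_mul_exp (b : ℝ) (v p q : V) :
    rexp (-(2*b) * ‖v - p‖^2) * rexp (-(2*b) * ‖v - q‖^2)
      = rexp (-(4*b) * ‖v - (2:ℝ)⁻¹ • (p + q)‖^2) * rexp (-b * ‖p - q‖^2) := by
  rw [← Real.exp_add, ← Real.exp_add]
  congr 1
  have h1 : ∀ a : V, ‖a‖^2 = ⟪a, a⟫ := fun a => (real_inner_self_eq_norm_sq a).symm
  rw [h1, h1, h1, h1]
  simp only [inner_sub_left, inner_sub_right, inner_add_left, inner_add_right,
    real_inner_smul_left, real_inner_smul_right, real_inner_comm v p, real_inner_comm v q,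
    real_inner_comm q p]
  ring

lemma integrable_gauss {b : ℝ} (hb : 0 < b) : Integrable (fun v : V => rexp (-b * ‖v‖^2)) := by
  have h : Integrable (fun v : V => Complex.exp (-(b:ℂ) * ‖v‖^2)) := by
    simpa using GaussianFourier.integrable_cexp_neg_mul_sq_norm_add (V := V) (b := (b:ℂ))
      (by simpa using hb) 0 0
  refine h.re.congr (Filter.Eventually.of_forall fun v => ?_)
  have e : -(b:ℂ) * (‖v‖:ℂ)^2 = ((-b * ‖v‖^2 : ℝ) : ℂ) := by push_cast; ring
  simp only [e, Complex.exp_ofReal_re, RCLike.re_to_complex]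

/-- The main quadratic-form positivity lemma. -/
lemma quad_pos {b : ℝ} (hb : 0 < b) {n : ℕ}
    (x : Fin n → V) (hx : Function.Injective x)
    (c : Fin n → ℝ) (hc : c ≠ 0) :
    0 < ∑ i, ∑ j, c i * c j * rexp (-b * ‖x i - x j‖^2) := by
  set K : ℝ := (π / (4*b)) ^ ((Module.finrank ℝ V : ℝ) / 2) with hKdef
  have hK : 0 < K := Real.rpow_pos_of_pos (div_pos Real.pi_pos (by linarith)) _
  set g : Fin n → V → ℝ := fun i v => rexp (-(2*b) * ‖v - x i‖^2) with hg
  set f : V → ℝ := fun v => ∑ i, c i * g i v with hf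
  have hgauss : Integrable (fun v : V => rexp (-(4*b) * ‖v‖^2)) := integrable_gauss (by linarith)
  -- integrability of products
  have hinteg : ∀ i j : Fin n, Integrable (fun v => g i v * g j v) := by
    intro i j
    simp only [hg, exp_mul_exp b _ (x i) (x j)]
    exact (hgauss.comp_sub_right _).mul_const _
  -- the key integral
  have hint : ∀ i j : Fin n, ∫ v : V, g i v * g j v = K * rexp (-b * ‖x i - x j‖^2) := by
    intro i j
    simp only [hg, exp_mul_exp b _ (x i) (x j)]
    rw [MeasureTheory.integral_mul_const,
      MeasureTheory.integral_sub_right_eq_self (fun v : V => rexp (-(4*b) * ‖v‖^2)),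
      GaussianFourier.integral_rexp_neg_mul_sq_norm (by linarith : (0:ℝ) < 4*b), mul_comm]
  -- expand f^2
  have hsq : ∀ v, f v ^ 2 = ∑ i, ∑ j, (c i * c j) * (g i v * g j v) := by
    intro v
    rw [hf, sq, Finset.sum_mul_sum]
    exact Finset.sum_congr rfl fun i _ => Finset.sum_congr rfl fun j _ => by ring
  have hintf : ∫ v : V, f v ^ 2 = K * ∑ i, ∑ j, c i * c j * rexp (-b * ‖x i - x j‖^2) := by
    simp only [hsq]
    rw [MeasureTheory.integral_finset_sum _ fun i _ =>
      integrable_finset_sum _ fun j _ => (hinteg i j).const_mul _]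
    rw [Finset.mul_sum]
    refine Finset.sum_congr rfl fun i _ => ?_
    rw [MeasureTheory.integral_finset_sum _ fun j _ => (hinteg i j).const_mul _, Finset.mul_sum]
    refine Finset.sum_congr rfl fun j _ => ?_
    rw [integral_const_mul, hint i j]
    ring
  -- f is continuous
  have hfc : Continuous f := by
    refine continuous_finset_sum _ fun i _ => Continuous.mul continuous_const ?_
    exact Real.continuous_exp.comp (by fun_prop)
  -- f is not identically zero
  have hfne : f ≠ 0 := by
    intro hf0
    set gfun : Fin n → ℝ := fun i => c i * rexp (-(2*b) * ‖x i‖^2) with hgfun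
    set χ : Fin n → (Multiplicative V →* ℝ) := fun i =>
      { toFun := fun v => rexp ((4*b) * ⟪x i, v.toAdd⟫)
        map_one' := by simp
        map_mul' := fun v w => by
          simp only [toAdd_mul, inner_add_right, mul_add, Real.exp_add] } with hχ
    have hχinj : Function.Injective χ := by
      intro i j h
      apply hx
      have h2 := DFunLike.congr_fun h (Multiplicative.ofAdd (x i - x j))
      simp only [hχ, MonoidHom.coe_mk, OneHom.coe_mk, toAdd_ofAdd] at h2
      have h3 : (4*b) * ⟪x i, x i - x j⟫ = (4*b) * ⟪x j, x i - x j⟫ := Real.exp_injective h2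
      have h4 : ⟪x i - x j, x i - x j⟫ = 0 := by
        rw [inner_sub_left]
        have := mul_left_cancel₀ (by positivity : (4*b) ≠ 0) h3
        linarith
      have := inner_self_eq_zero.mp h4
      exact sub_eq_zero.mp this
    have hLI : LinearIndependent ℝ (fun i => ⇑(χ i)) :=
      (linearIndependent_monoidHom (Multiplicative V) ℝ).comp χ hχinj
    rw [Fintype.linearIndependent_iff] at hLI
    have hall := hLI gfun ?_
    · apply hc
      funext i
      have h5 := hall i
      simp only [hgfun] at h5
      show c i = 0
      exact (mul_eq_zero.mp h5).resolve_right (Real.exp_ne_zero _)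
    · funext v
      set w : V := v.toAdd with hw
      have hfw : f w = 0 := congrFun hf0 w
      have hterm : ∀ i, gfun i * rexp ((4*b) * ⟪x i, w⟫)
          = rexp ((2*b) * ‖w‖^2) * (c i * g i w) := by
        intro i
        rw [hgfun, hg]
        simp only
        rw [mul_assoc, ← Real.exp_add]
        rw [show rexp ((2*b) * ‖w‖^2) * (c i * rexp (-(2*b) * ‖w - x i‖^2))
            = c i * rexp ((2*b) * ‖w‖^2 + -(2*b) * ‖w - x i‖^2) by
          rw [Real.exp_add]; ring]
        congr 1
        have h1 : ∀ a : V, ‖a‖^2 = ⟪a, a⟫ := fun a => (real_inner_self_eq_norm_sq a).symm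
        rw [h1, h1, h1]
        simp only [inner_sub_left, inner_sub_right, real_inner_comm w (x i)]
        ring
      have : ∑ i, gfun i * rexp ((4*b) * ⟪x i, w⟫) = 0 := by
        simp only [hterm, ← Finset.mul_sum]
        rw [show (∑ i, c i * g i w) = f w from rfl, hfw, mul_zero]
      simpa [hχ, Finset.sum_apply, Pi.smul_apply, smul_eq_mul] using this
  -- the integral of f^2 is positive
  have hintegf2 : Integrable (fun v : V => f v ^ 2) := by
    simp only [hsq]
    exact integrable_finset_sum _ fun i _ =>
      integrable_finset_sum _ fun j _ => (hinteg i j).const_mul _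
  have hpos : 0 < ∫ v : V, f v ^ 2 := by
    rcases lt_or_eq_of_le (integral_nonneg (f := fun v => f v ^ 2) (fun v => sq_nonneg (f v))) with h | h
    · exact h
    exfalso
    have h0 : (fun v : V => f v ^ 2) =ᵐ[volume] 0 :=
      (integral_eq_zero_iff_of_nonneg (fun v => sq_nonneg (f v)) hintegf2).mp h.symm
    have : (fun v : V => f v ^ 2) = 0 :=
      (Continuous.ae_eq_iff_eq volume (by fun_prop) continuous_const).mp h0
    apply hfne
    funext v
    have h6 := congrFun this v
    simp only [Pi.zero_apply] at h6
    simpa using pow_eq_zero_iff (two_ne_zero) |>.mp h6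
  nlinarith [hintf, hK, hpos]

end GaussAux

end

/-- The Gaussian radial basis function `φ_G(r) = exp (-α² r²)` is strictly
positive definite on ℝ²: for every shape parameter `α > 0`, every `n ≥ 1`, every tuple of
pairwise distinct points and every nonzero vector `c`, the quadratic form
`∑ i ∑ j, c i * c j * exp (-α² ‖x i - x j‖²)` is positive; equivalently, the matrix with
entries `exp (-α² ‖x i - x j‖²)` is positive definite. -/
theorem gaussian_strictly_positive_definite
    (α : ℝ) (hα : 0 < α) (n : ℕ) (hn : 1 ≤ n)
    (x : Fin n → EuclideanSpace ℝ (Fin 2)) (hx : Function.Injective x)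
    (c : Fin n → ℝ) (hc : c ≠ 0) :
    0 < (∑ i, ∑ j, c i * c j * Real.exp (-α ^ 2 * ‖x i - x j‖ ^ 2)) ∧
      (Matrix.of fun i j => Real.exp (-α ^ 2 * ‖x i - x j‖ ^ 2)).PosDef := by
  have hb : (0:ℝ) < α ^ 2 := pow_pos hα 2
  have key : ∀ y : Fin n → ℝ, y ≠ 0 →
      0 < ∑ i, ∑ j, y i * y j * Real.exp (-α ^ 2 * ‖x i - x j‖ ^ 2) := by
    intro y hy
    simpa using GaussAux.quad_pos hb x hx y hy
  refine ⟨key c hc, Matrix.PosDef.of_dotProduct_mulVec_pos ?_ ?_⟩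
  · ext i j
    simp [Matrix.conjTranspose_apply, norm_sub_rev]
  · intro y hy
    have := key y hy
    simp only [star_trivial, dotProduct, Matrix.mulVec, Matrix.of_apply]
    refine lt_of_lt_of_eq this (Eq.symm ?_)
    rw [Finset.sum_comm]
    refine Finset.sum_congr rfl fun i _ => ?_
    simp only [dotProduct, Finset.mul_sum]
    refine Finset.sum_congr rfl fun j _ => ?_
    rw [norm_sub_rev (x j) (x i)]
    ring
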